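/- Let b ≥ 1, let T be a tree on n₁ vertices with leaf set S, and let T' be obtained from T by attaching ⌊n₁^β + b⌋ new pendant leaves to each leaf of T (for some real β ≥ 1). If a budget-b firefighting strategy on T (fire starting at a fixed vertex s) saves all leaves of T, then the same strategy applied to T' (fire starting at s) burns at most n₁ vertices of T'. Conversely, if every budget-b strategy on T burns at least one leaf of T, then every budget-b strategy on T' burns at least ⌊n₁^β⌋ vertices of T'. -/

import Mathlib

/-- `burnedSet G s φ t` is the set of vertices of `G` burned at time `t` in the firefighting
process where `s` is burned at time `0` and `φ t'` is the set of vertices protected at time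
step `t'`: at each step the fire spreads from every burned vertex to each of its neighbors
that has not been protected at any time step so far. -/
def burnedSet {V : Type} (G : SimpleGraph V) (s : V) (φ : ℕ → Finset V) : ℕ → Set V
  | 0 => {s}
  | t + 1 => burnedSet G s φ t ∪
      {w | (∃ v ∈ burnedSet G s φ t, G.Adj v w) ∧ ∀ t' ≤ t + 1, w ∉ φ t'}

/-- A strategy is valid with respect to budget `b` if no vertex is protected at time `0`,
at most `b` vertices are protected at each time step, and a vertex protected at time `t+1`
is not burned at time `t`. -/
def validStrategy {V : Type} (G : SimpleGraph V) (s : V) (b : ℕ) (φ : ℕ → Finset V) : Prop :=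
  φ 0 = ∅ ∧ (∀ t, (φ t).card ≤ b) ∧ ∀ t v, v ∈ φ (t + 1) → v ∉ burnedSet G s φ t

/-- A vertex is saved if it is never burned. -/
def savedBy {V : Type} (G : SimpleGraph V) (s : V) (φ : ℕ → Finset V) (v : V) : Prop :=
  ∀ t, v ∉ burnedSet G s φ t

/-- `attachPendants G P m` is the graph obtained from `G` by attaching `m` new pendant
leaves to every vertex satisfying `P`. -/
def attachPendants {V : Type} (G : SimpleGraph V) (P : V → Prop) (m : ℕ) :
    SimpleGraph (V ⊕ ({v : V // P v} × Fin m)) :=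
  SimpleGraph.fromRel (fun x y =>
    match x, y with
    | Sum.inl a, Sum.inl c => G.Adj a c
    | Sum.inl a, Sum.inr p => a = p.1.1
    | _, _ => False)

lemma burnedSet_succ {V : Type} (G : SimpleGraph V) (s : V) (φ : ℕ → Finset V) (t : ℕ) :
    burnedSet G s φ (t+1) = burnedSet G s φ t ∪
      {w | (∃ v ∈ burnedSet G s φ t, G.Adj v w) ∧ ∀ t' ≤ t + 1, w ∉ φ t'} := rfl

lemma burnedSet_mono {V : Type} (G : SimpleGraph V) (s : V) (φ : ℕ → Finset V) :
    ∀ {t t' : ℕ}, t ≤ t' → burnedSet G s φ t ⊆ burnedSet G s φ t' := by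
  intro t t' h
  induction t' with
  | zero => simp_all
  | succ n ih =>
    rcases Nat.lt_or_ge t (n+1) with h' | h'
    · exact (ih (Nat.lt_succ_iff.mp h')).trans (Set.subset_union_left)
    · have : t = n + 1 := le_antisymm h h'
      subst this; rfl

lemma burnedSet_congr {V : Type} (G : SimpleGraph V) (s : V) {φ₁ φ₂ : ℕ → Finset V} :
    ∀ t, (∀ t' ≤ t, φ₁ t' = φ₂ t') → burnedSet G s φ₁ t = burnedSet G s φ₂ t := by
  intro t
  induction t with
  | zero => intro _; rfl
  | succ n ih =>
    intro h
    have h1 : burnedSet G s φ₁ n = burnedSet G s φ₂ n :=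
      ih fun t' ht' => h t' (ht'.trans n.le_succ)
    rw [burnedSet_succ, burnedSet_succ, h1]
    congr 1
    ext w
    simp only [Set.mem_setOf_eq]
    constructor <;> rintro ⟨h2, h3⟩ <;> refine ⟨h2, fun t' ht' => ?_⟩
    · rw [← h t' ht']; exact h3 t' ht'
    · rw [h t' ht']; exact h3 t' ht'

open scoped Classical in
noncomputable def Phi {V W : Type} [DecidableEq V] (g : W → V) (G : SimpleGraph V) (s : V)
    (ψ : ℕ → Finset W) : ℕ → ℕ → Finset V
  | 0 => fun _ => ∅
  | t + 1 => fun t'' => if t'' = t + 1 then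
      ((ψ (t+1)).image g).filter (fun v => v ∉ burnedSet G s (Phi g G s ψ t) t)
      else Phi g G s ψ t t''

noncomputable def projStrat {V W : Type} [DecidableEq V] (g : W → V) (G : SimpleGraph V) (s : V)
    (ψ : ℕ → Finset W) : ℕ → Finset V := fun t => Phi g G s ψ t t

lemma Phi_agree {V W : Type} [DecidableEq V] (g : W → V) (G : SimpleGraph V) (s : V) (ψ : ℕ → Finset W) :
    ∀ t t', t' ≤ t → Phi g G s ψ t t' = projStrat g G s ψ t' := by
  intro t
  induction t with
  | zero => intro t' ht'; simp at ht'; subst ht'; rfl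
  | succ n ih =>
    intro t' ht'
    rcases Nat.lt_or_ge t' (n+1) with h' | h'
    · have : Phi g G s ψ (n+1) t' = Phi g G s ψ n t' := by
        rw [Phi]; simp [Nat.ne_of_lt h']
      rw [this, ih t' (Nat.lt_succ_iff.mp h')]
    · have : t' = n + 1 := le_antisymm ht' h'
      subst this; rfl

lemma projStrat_zero {V W : Type} [DecidableEq V] (g : W → V) (G : SimpleGraph V) (s : V)
    (ψ : ℕ → Finset W) : projStrat g G s ψ 0 = ∅ := rfl

open scoped Classical in
lemma projStrat_succ {V W : Type} [DecidableEq V] (g : W → V) (G : SimpleGraph V) (s : V)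
    (ψ : ℕ → Finset W) (t : ℕ) :
    projStrat g G s ψ (t+1) =
      ((ψ (t+1)).image g).filter
        (fun v => v ∉ burnedSet G s (projStrat g G s ψ) t) := by
  have hb : burnedSet G s (Phi g G s ψ t) t = burnedSet G s (projStrat g G s ψ) t :=
    burnedSet_congr G s t (fun t' ht' => Phi_agree g G s ψ t t' ht')
  show Phi g G s ψ (t+1) (t+1) = _
  rw [Phi]
  simp only [if_pos rfl, hb]
  simp

lemma attachPendants_adj_inl_inl {V : Type} {G : SimpleGraph V} {P : V → Prop} {m : ℕ}
    {u v : V} : (attachPendants G P m).Adj (Sum.inl u) (Sum.inl v) ↔ G.Adj u v := by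
  simp only [attachPendants, SimpleGraph.fromRel_adj, ne_eq, Sum.inl.injEq]
  constructor
  · rintro ⟨h1, h2 | h2⟩
    · exact h2
    · exact h2.symm
  · intro h; exact ⟨h.ne, Or.inl h⟩

lemma part2_key {V : Type} [DecidableEq V] (G : SimpleGraph V) (s : V) (P : V → Prop) (m : ℕ)
    (ψ : ℕ → Finset (V ⊕ ({v : V // P v} × Fin m))) (hψ0 : ψ 0 = ∅) :
    ∀ t v, v ∈ burnedSet G s (projStrat (Sum.elim id (fun p => p.1.1)) G s ψ) t →
      Sum.inl v ∈ burnedSet (attachPendants G P m) (Sum.inl s) ψ t := by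
  classical
  set g : (V ⊕ ({v : V // P v} × Fin m)) → V := Sum.elim id (fun p => p.1.1) with hg
  set φ := projStrat g G s ψ with hφ
  intro t
  induction t with
  | zero =>
    intro v hv
    simp only [burnedSet, Set.mem_singleton_iff] at hv ⊢
    rw [hv]
  | succ n ih =>
    intro v hv
    rcases hv with hv | ⟨⟨u, hu, hadj⟩, hprot⟩
    · exact Set.subset_union_left (ih v hv)
    · by_cases hcase : ∀ t' ≤ n+1, (Sum.inl v : V ⊕ ({v : V // P v} × Fin m)) ∉ ψ t'
      · right
        exact ⟨⟨Sum.inl u, ih u hu, attachPendants_adj_inl_inl.mpr hadj⟩, hcase⟩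
      · push_neg at hcase
        obtain ⟨t', ht', hmem⟩ := hcase
        cases t' with
        | zero => rw [hψ0] at hmem; exact absurd hmem (Finset.notMem_empty _)
        | succ j =>
          have hnj : v ∉ φ (j+1) := hprot (j+1) ht'
          rw [hφ, projStrat_succ] at hnj
          have himg : v ∈ (ψ (j+1)).image g := Finset.mem_image.mpr ⟨_, hmem, rfl⟩
          have hvburn : v ∈ burnedSet G s φ j := by
            by_contra hc
            exact hnj (Finset.mem_filter.mpr ⟨himg, hc⟩)
          have : v ∈ burnedSet G s φ n :=
            burnedSet_mono G s φ (Nat.lt_succ_iff.mp ht') hvburn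
          exact Set.subset_union_left (ih v this)

lemma attachPendants_adj_inl_inr {V : Type} {G : SimpleGraph V} {P : V → Prop} {m : ℕ}
    {u : V} {p : {v : V // P v} × Fin m} :
    (attachPendants G P m).Adj (Sum.inl u) (Sum.inr p) ↔ u = p.1.1 := by
  simp only [attachPendants, SimpleGraph.fromRel_adj, ne_eq]
  constructor
  · rintro ⟨h1, h2 | h2⟩
    · exact h2
    · exact h2.elim
  · intro h; exact ⟨by simp, Or.inl h⟩

lemma attachPendants_adj_inr {V : Type} {G : SimpleGraph V} {P : V → Prop} {m : ℕ}
    {p : {v : V // P v} × Fin m} {x : V ⊕ ({v : V // P v} × Fin m)} :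
    (attachPendants G P m).Adj (Sum.inr p) x → x = Sum.inl p.1.1 := by
  intro h
  cases x with
  | inl u => exact congrArg Sum.inl ((attachPendants_adj_inl_inr.mp h.symm))
  | inr q =>
    exfalso
    rcases h.2 with h2 | h2 <;> exact h2

lemma part1_key {V : Type} [DecidableEq V] (G : SimpleGraph V) (s : V) (P : V → Prop) (m : ℕ)
    (φ : ℕ → Finset V) (hsave : ∀ v, P v → savedBy G s φ v) :
    ∀ t, burnedSet (attachPendants G P m) (Sum.inl s) (fun t => (φ t).image Sum.inl) t
      = Sum.inl '' burnedSet G s φ t := by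
  intro t
  induction t with
  | zero => simp [burnedSet]
  | succ n ih =>
    rw [burnedSet_succ, burnedSet_succ, ih, Set.image_union]
    congr 1
    ext x
    simp only [Set.mem_setOf_eq, Set.mem_image]
    constructor
    · rintro ⟨⟨y, ⟨u, hu, rfl⟩, hadj⟩, hprot⟩
      cases x with
      | inl v =>
        refine ⟨v, ⟨⟨u, hu, attachPendants_adj_inl_inl.mp hadj⟩, fun t' ht' hv => ?_⟩, rfl⟩
        exact hprot t' ht' (Finset.mem_image_of_mem _ hv)
      | inr p =>
        exfalso
        have : u = p.1.1 := attachPendants_adj_inl_inr.mp hadj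
        rw [this] at hu
        exact hsave _ p.1.2 n hu
    · rintro ⟨v, ⟨⟨u, hu, hadj⟩, hprot⟩, rfl⟩
      refine ⟨⟨Sum.inl u, ⟨u, hu, rfl⟩, attachPendants_adj_inl_inl.mpr hadj⟩,
        fun t' ht' hv => ?_⟩
      rw [Finset.mem_image] at hv
      rcases hv with ⟨a, ha, hav⟩
      cases Sum.inl_injective hav
      exact hprot t' ht' ha

/-- Let `b ≥ 1`, let `T` be a tree on `n₁` vertices with fire starting at `s` and with leaf
set `S` (the vertices of degree `1` other than `s`), and let `T'` be obtained from `T` by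
attaching `m = ⌊n₁^β + b⌋` new pendant leaves to each leaf of `T`, for some real `β ≥ 1`.
Then: (1) if a valid budget-`b` strategy on `T` saves all leaves of `T`, the same strategy
applied to `T'` burns at most `n₁` vertices of `T'`; and (2) if every valid budget-`b`
strategy on `T` burns at least one leaf of `T`, then every valid budget-`b` strategy on
`T'` burns at least `⌊n₁^β⌋` vertices of `T'`. -/
theorem stmt11 {V : Type} [Fintype V] [DecidableEq V] (G : SimpleGraph V) [DecidableRel G.Adj]
    (hG : G.IsTree) (s : V) (b : ℕ) (hb : 1 ≤ b) (β : ℝ) (hβ : 1 ≤ β)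
    (n₁ m : ℕ) (hn₁ : n₁ = Fintype.card V) (hm : m = ⌊(n₁ : ℝ) ^ β + (b : ℝ)⌋₊) :
    (∀ φ : ℕ → Finset V, validStrategy G s b φ →
        (∀ v, G.degree v = 1 → v ≠ s → savedBy G s φ v) →
        Set.ncard {w | ∃ t, w ∈ burnedSet
            (attachPendants G (fun v => G.degree v = 1 ∧ v ≠ s) m) (Sum.inl s)
            (fun t => (φ t).image Sum.inl) t} ≤ n₁) ∧
    ((∀ φ : ℕ → Finset V, validStrategy G s b φ →
          ∃ v t, G.degree v = 1 ∧ v ≠ s ∧ v ∈ burnedSet G s φ t) →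
      ∀ ψ, validStrategy (attachPendants G (fun v => G.degree v = 1 ∧ v ≠ s) m)
          (Sum.inl s) b ψ →
        ⌊(n₁ : ℝ) ^ β⌋₊ ≤ Set.ncard {w | ∃ t, w ∈ burnedSet
            (attachPendants G (fun v => G.degree v = 1 ∧ v ≠ s) m) (Sum.inl s) ψ t}) := by
  classical
  constructor
  · -- Part 1
    intro φ hval hsave
    have hkey := part1_key G s (fun v => G.degree v = 1 ∧ v ≠ s) m φ
      (fun v hv => hsave v hv.1 hv.2)
    have hsub : {w | ∃ t, w ∈ burnedSet
        (attachPendants G (fun v => G.degree v = 1 ∧ v ≠ s) m) (Sum.inl s)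
        (fun t => (φ t).image Sum.inl) t} ⊆ Set.range Sum.inl := by
      rintro w ⟨t, hw⟩
      rw [hkey t] at hw
      rcases hw with ⟨v, _, rfl⟩
      exact ⟨v, rfl⟩
    calc Set.ncard _ ≤ (Set.range (Sum.inl : V → _)).ncard :=
          Set.ncard_le_ncard hsub (Set.toFinite _)
      _ = n₁ := by
          rw [← Set.image_univ, Set.ncard_image_of_injective _ Sum.inl_injective,
            Set.ncard_univ, Nat.card_eq_fintype_card, hn₁]
  · -- Part 2
    intro hH ψ hψ
    obtain ⟨hψ0, hψcard, hψprot⟩ := hψ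
    set g : (V ⊕ ({v : V // G.degree v = 1 ∧ v ≠ s} × Fin m)) → V :=
      Sum.elim id (fun p => p.1.1) with hg
    set φ := projStrat g G s ψ with hφ
    have hφval : validStrategy G s b φ := by
      refine ⟨rfl, fun t => ?_, fun t v hv => ?_⟩
      · cases t with
        | zero => simp [hφ, projStrat_zero]
        | succ n =>
          rw [hφ, projStrat_succ]
          exact le_trans (Finset.card_filter_le _ _)
            (le_trans (Finset.card_image_le) (hψcard _))
      · rw [hφ, projStrat_succ] at hv
        exact (Finset.mem_filter.mp hv).2
    obtain ⟨v, t, hdeg, hvs, hburn⟩ := hH φ hφval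
    have hPv : G.degree v = 1 ∧ v ≠ s := ⟨hdeg, hvs⟩
    set pend : Fin m → V ⊕ ({v' : V // G.degree v' = 1 ∧ v' ≠ s} × Fin m) :=
      fun i => Sum.inr (⟨v, hPv⟩, i) with hpenddef
    have hex : ∃ t, v ∈ burnedSet G s φ t := ⟨t, hburn⟩
    have ht₀ : v ∈ burnedSet G s φ (Nat.find hex) := Nat.find_spec hex
    have hmin : ∀ j < Nat.find hex, v ∉ burnedSet G s φ j :=
      fun j hj => Nat.find_min hex hj
    have ht0ne : Nat.find hex ≠ 0 := by
      intro h0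
      rw [h0] at ht₀
      simp only [burnedSet, Set.mem_singleton_iff] at ht₀
      exact hvs ht₀
    obtain ⟨k, hk⟩ := Nat.exists_eq_succ_of_ne_zero ht0ne
    rw [hk] at ht₀ hmin
    have hnprot : ∀ t' ≤ k+1, v ∉ φ t' := by
      rcases ht₀ with h | ⟨_, h⟩
      · exact absurd h (hmin k (Nat.lt_succ_self k))
      · exact h
    have hpend : ∀ t' ≤ k+1, ∀ i : Fin m,
        pend i ∉ ψ t' := by
      intro t' ht' i hmem
      cases t' with
      | zero => rw [hψ0] at hmem; exact absurd hmem (Finset.notMem_empty _)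
      | succ j =>
        apply hnprot (j+1) ht'
        rw [hφ, projStrat_succ]
        refine Finset.mem_filter.mpr ⟨?_, hmin j (by omega)⟩
        exact Finset.mem_image.mpr ⟨_, hmem, rfl⟩
    have hinlv : Sum.inl v ∈ burnedSet
        (attachPendants G (fun v => G.degree v = 1 ∧ v ≠ s) m) (Sum.inl s) ψ (k+1) :=
      part2_key G s _ m ψ hψ0 (k+1) v ht₀
    have hburnp : ∀ i : Fin m, pend i ∉ ψ (k+2) →
        pend i ∈ burnedSet
          (attachPendants G (fun v => G.degree v = 1 ∧ v ≠ s) m) (Sum.inl s) ψ (k+2) := by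
      intro i hi
      rw [burnedSet_succ]
      right
      refine ⟨⟨Sum.inl v, hinlv, attachPendants_adj_inl_inr.mpr rfl⟩, ?_⟩
      intro t' ht'
      rcases Nat.lt_or_ge t' (k+2) with h' | h'
      · exact hpend t' (Nat.lt_succ_iff.mp h') i
      · have : t' = k+2 := le_antisymm ht' h'
        rw [this]
        exact hi
    set A : Finset (Fin m) :=
      Finset.univ.filter (fun i => pend i ∈ ψ (k+2)) with hA
    have hinj : Function.Injective
        pend := by
      intro a c h
      simpa [hpenddef] using h
    have hAcard : A.card ≤ b := by
      refine le_trans (Finset.card_le_card_of_injOn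
        pend
        (fun i hi => (Finset.mem_filter.mp hi).2) (fun a _ c _ h => hinj h)) (hψcard (k+2))
    have hsub2 : (pend '' ↑Aᶜ) ⊆
        {w | ∃ t, w ∈ burnedSet
          (attachPendants G (fun v => G.degree v = 1 ∧ v ≠ s) m) (Sum.inl s) ψ t} := by
      rintro w ⟨i, hi, rfl⟩
      refine ⟨k+2, hburnp i ?_⟩
      simp only [Finset.coe_compl, Set.mem_compl_iff, Finset.mem_coe, hA,
        Finset.mem_filter, Finset.mem_univ, true_and] at hi
      exact hi
    have hm' : m = ⌊(n₁ : ℝ) ^ β⌋₊ + b := by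
      rw [hm]
      exact Nat.floor_add_natCast (Real.rpow_nonneg (Nat.cast_nonneg _) _) b
    calc ⌊(n₁ : ℝ) ^ β⌋₊ ≤ Aᶜ.card := by
          rw [Finset.card_compl, Fintype.card_fin]
          omega
      _ = (pend '' ↑Aᶜ).ncard := by
          rw [Set.ncard_image_of_injective _ hinj, Set.ncard_coe_finset]
      _ ≤ _ := Set.ncard_le_ncard hsub2 (Set.toFinite _)
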